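/- For all k > 0 and d > 0, the function t ↦ 1/t - (1/(2k·t²))·(1 - exp(-2kt)) is positive and decreasing in t on (0, ∞). -/

import Mathlib

lemma key_ineq_aux (u : ℝ) (hu : 0 ≤ u) : 2 - u ≤ (u + 2) * Real.exp (-u) := by
  have hd : ∀ v : ℝ, HasDerivAt (fun v : ℝ => (v + 2) * Real.exp (-v) + v - 2)
      (1 - (v + 1) * Real.exp (-v)) v := by
    intro v
    have h1 : HasDerivAt (fun x : ℝ => Real.exp (-x)) (-Real.exp (-v)) v := by
      simpa using (hasDerivAt_neg v).exp
    have h2 : HasDerivAt (fun x : ℝ => (x + 2) * Real.exp (-x))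
        (1 * Real.exp (-v) + (v + 2) * (-Real.exp (-v))) v :=
      ((hasDerivAt_id v).add_const 2).mul h1
    have h3 := (h2.add (hasDerivAt_id v)).sub_const 2
    refine h3.congr_deriv ?_
    ring
  have hmono : MonotoneOn (fun v : ℝ => (v + 2) * Real.exp (-v) + v - 2) (Set.Ici 0) := by
    apply monotoneOn_of_deriv_nonneg (convex_Ici 0)
    · exact fun v _ => (hd v).continuousAt.continuousWithinAt
    · exact fun v _ => (hd v).differentiableAt.differentiableWithinAt
    · intro v hv
      rw [(hd v).deriv]
      have hm : Real.exp v * Real.exp (-v) = 1 := by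
        rw [← Real.exp_add]; simp
      have h1 := Real.add_one_le_exp v
      have h2 := Real.exp_pos (-v)
      nlinarith
  have h0 := hmono (Set.self_mem_Ici) (Set.mem_Ici.mpr hu) hu
  simp only [Real.exp_zero] at h0
  norm_num at h0
  linarith

theorem aux_function_pos_antitone (k : ℝ) (hk : 0 < k) :
    (∀ t : ℝ, 0 < t →
      0 < 1 / t - (1 / (2 * k * t ^ 2)) * (1 - Real.exp (-(2 * k * t)))) ∧
    AntitoneOn (fun t : ℝ => 1 / t - (1 / (2 * k * t ^ 2)) * (1 - Real.exp (-(2 * k * t))))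
      (Set.Ioi 0) := by
  have hk' := hk.ne'
  have hderiv : ∀ x : ℝ, 0 < x →
      HasDerivAt (fun t : ℝ => 1 / t - (1 / (2 * k * t ^ 2)) * (1 - Real.exp (-(2 * k * t))))
        ((1 - Real.exp (-(2 * k * x)) - k * x * (1 + Real.exp (-(2 * k * x)))) / (k * x ^ 3))
        x := by
    intro x hx
    have hx' := hx.ne'
    have hinv : HasDerivAt (fun t : ℝ => 1 / t) (-1 / x ^ 2) x := by
      have := hasDerivAt_inv hx'
      simpa [one_div, neg_div] using this
    have hl : HasDerivAt (fun t : ℝ => -(2 * k * t)) (-(2 * k)) x := by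
      have := (hasDerivAt_id x).const_mul (-(2 * k))
      simpa [neg_mul, mul_assoc] using this
    have hE : HasDerivAt (fun t : ℝ => 1 - Real.exp (-(2 * k * t)))
        (-(Real.exp (-(2 * k * x)) * -(2 * k))) x :=
      (hl.exp).const_sub 1
    have hden : HasDerivAt (fun t : ℝ => 2 * k * t ^ 2) (2 * k * (2 * x ^ 1)) x := by
      simpa using (hasDerivAt_pow 2 x).const_mul (2 * k)
    have hc : HasDerivAt (fun t : ℝ => 1 / (2 * k * t ^ 2))
        ((0 * (2 * k * x ^ 2) - 1 * (2 * k * (2 * x ^ 1))) / (2 * k * x ^ 2) ^ 2) x :=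
      (hasDerivAt_const x (1 : ℝ)).div hden (by positivity)
    have hfull := hinv.sub (hc.mul hE)
    refine hfull.congr_deriv ?_
    field_simp
    ring
  constructor
  · intro t ht
    have ht' := ht.ne'
    have hne : -(2 * k * t) ≠ 0 := by
      have : 0 < 2 * k * t := by positivity
      linarith
    have hexp : 1 - Real.exp (-(2 * k * t)) < 2 * k * t := by
      have := Real.add_one_lt_exp hne
      linarith
    rw [sub_pos]
    calc (1 / (2 * k * t ^ 2)) * (1 - Real.exp (-(2 * k * t)))
        < (1 / (2 * k * t ^ 2)) * (2 * k * t) := by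
          apply mul_lt_mul_of_pos_left hexp
          positivity
      _ = 1 / t := by field_simp
  · apply antitoneOn_of_deriv_nonpos (convex_Ioi 0)
    · exact fun x hx => (hderiv x hx).continuousAt.continuousWithinAt
    · intro x hx
      rw [interior_Ioi] at hx
      exact (hderiv x hx).differentiableAt.differentiableWithinAt
    · intro x hx
      rw [interior_Ioi] at hx
      have hx0 : 0 < x := hx
      rw [(hderiv x hx0).deriv]
      apply div_nonpos_of_nonpos_of_nonneg
      · have hkey := key_ineq_aux (2 * k * x) (by positivity)
        nlinarith
      · positivity
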